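/- Vanishing rate of F₋: there exists a universal constant c > 0 such that for every fixed x ∈ (0,2π) the function y ↦ F₋(x,y) on [0,2π] has exactly two zeros y' < y'' which satisfy 0 < y' < 2π−x < y'' < 2π; F₋(x,y) < 0 if and only if y ∈ (y', y''); and moreover F₋(x,y) ≥ c·(y'−y)·sin(x/2) for all y ∈ [0, y') and F₋(x,y) ≥ c·(y−y'')·sin(x/2) for all y ∈ (y'', 2π]. -/

import Mathlib

open MeasureTheory Real Set

noncomputable section

/-- The dispersion relation `ω(p) = |sin(p/2)|`. -/
def ω (p : ℝ) : ℝ := |Real.sin (p / 2)|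

/-- Parameterization `h(x,z)` of the resonant manifold. -/
def resH (x z : ℝ) : ℝ :=
  (z - x) / 2 + 2 * Real.arcsin (Real.tan (|z - x| / 4) * Real.cos ((x + z) / 4))

/-- `F₊(x,z) = (cos(x/2)+cos(z/2))² + 4 sin(x/2) sin(z/2)`. -/
def Fplus (x z : ℝ) : ℝ :=
  (Real.cos (x / 2) + Real.cos (z / 2)) ^ 2 + 4 * Real.sin (x / 2) * Real.sin (z / 2)

/-- `F₋(x,z) = (cos(x/2)+cos(z/2))² − 4 sin(x/2) sin(z/2)`. -/
def Fminus (x z : ℝ) : ℝ :=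
  (Real.cos (x / 2) + Real.cos (z / 2)) ^ 2 - 4 * Real.sin (x / 2) * Real.sin (z / 2)

/-- Derivative of `y ↦ Fminus x y`. -/
def Dm (x y : ℝ) : ℝ :=
  -((Real.cos (x / 2) + Real.cos (y / 2)) * Real.sin (y / 2))
    - 2 * Real.sin (x / 2) * Real.cos (y / 2)

lemma hasDerivAt_Fminus (x y : ℝ) : HasDerivAt (fun z => Fminus x z) (Dm x y) y := by
  have h2 : HasDerivAt (fun z : ℝ => z / 2) (1 / 2) y := (hasDerivAt_id y).div_const 2
  have hc : HasDerivAt (fun z : ℝ => Real.cos (z / 2)) (-Real.sin (y / 2) * (1 / 2)) y :=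
    by have := (Real.hasDerivAt_cos (y / 2)).comp y h2; exact this
  have hs : HasDerivAt (fun z : ℝ => Real.sin (z / 2)) (Real.cos (y / 2) * (1 / 2)) y :=
    by have := (Real.hasDerivAt_sin (y / 2)).comp y h2; exact this
  have h1 : HasDerivAt (fun z : ℝ => (Real.cos (x / 2) + Real.cos (z / 2)) ^ 2)
      ((2 : ℕ) * (Real.cos (x / 2) + Real.cos (y / 2)) ^ (2 - 1)
        * (0 + -Real.sin (y / 2) * (1 / 2))) y :=
    ((hasDerivAt_const y (Real.cos (x / 2))).add hc).pow 2
  have h4 : HasDerivAt (fun z : ℝ => 4 * Real.sin (x / 2) * Real.sin (z / 2))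
      (4 * Real.sin (x / 2) * (Real.cos (y / 2) * (1 / 2))) y :=
    hs.const_mul _
  have H := h1.sub h4
  refine H.congr_deriv ?_
  unfold Dm
  push_cast
  ring

/-- Core algebraic inequality. -/
lemma key_ineq (c1 s1 c2 s2 : ℝ) (h1 : c1 ^ 2 + s1 ^ 2 = 1) (h2 : c2 ^ 2 + s2 ^ 2 = 1)
    (hs1 : 0 < s1) (hs2 : 0 ≤ s2) (hd : 0 ≤ c1 + c2) (hf : 4 * (s1 * s2) ≤ (c1 + c2) ^ 2) :
    2 * s1 ≤ (c1 + c2) * s2 + 2 * s1 * c2 := by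
  have hc1 : c1 < 1 := by nlinarith
  rcases eq_or_lt_of_le hs2 with h0 | h0
  · -- s2 = 0, so c2 = ±1
    have hcc : (c2 - 1) * (c2 + 1) = 0 := by nlinarith
    rcases mul_eq_zero.mp hcc with h | h
    · have : c2 = 1 := by linarith
      rw [this, ← h0]; ring_nf; nlinarith
    · have : c2 = -1 := by linarith
      rw [this] at hd; nlinarith
  · -- s2 > 0
    have hc2' : -1 < c2 := by nlinarith
    have h1c2 : 0 < 1 + c2 := by linarith
    have key1 : 2 * (s1 * s2) ≤ (c1 + c2) * (1 + c2) := by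
      nlinarith [mul_nonneg hd (show (0:ℝ) ≤ 2 + c2 - c1 by nlinarith)]
    have hG : 0 ≤ ((c1 + c2) * s2 + 2 * s1 * c2 - 2 * s1) * (1 + c2) := by
      nlinarith [mul_le_mul_of_nonneg_left key1 hs2]
    by_contra hcon
    push_neg at hcon
    have : ((c1 + c2) * s2 + 2 * s1 * c2 - 2 * s1) * (1 + c2) < 0 :=
      mul_neg_of_neg_of_pos (by linarith) h1c2
    linarith

/-- Continuous induction: if `g' < 0` wherever `g ≥ 0` on `[p,q]` and `g p ≤ 0`,
then `g < 0` on `(p,q]`. -/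
lemma negAfter (g g' : ℝ → ℝ) (hg : ∀ y, HasDerivAt g (g' y) y)
    (p q : ℝ) (hkey : ∀ y ∈ Icc p q, 0 ≤ g y → g' y < 0) (hp : g p ≤ 0) :
    ∀ y ∈ Ioc p q, g y < 0 := by
  have hcont : Continuous g := continuous_iff_continuousAt.mpr fun y => (hg y).continuousAt
  have part1 : ∀ y ∈ Icc p q, g y ≤ 0 := by
    by_contra hcon
    push_neg at hcon
    obtain ⟨w, hw, hw0⟩ := hcon
    set B : Set ℝ := {y | y ∈ Icc p q ∧ 0 < g y} with hB
    have hBne : B.Nonempty := ⟨w, hw, hw0⟩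
    have hBbd : BddBelow B := ⟨p, fun y hy => hy.1.1⟩
    set m := sInf B with hm
    have hmcl : m ∈ closure B := csInf_mem_closure hBne hBbd
    have hmIcc : m ∈ Icc p q :=
      isClosed_Icc.closure_subset (closure_mono (fun y hy => hy.1) hmcl)
    have hgm0 : 0 ≤ g m :=
      (isClosed_le continuous_const hcont).closure_subset
        (closure_mono (fun y hy => hy.2.le) hmcl)
    have hgm0' : g m ≤ 0 := by
      rcases eq_or_lt_of_le hmIcc.1 with he | hlt
      · rw [← he]; exact hp
      · have hev : ∀ᶠ y in nhdsWithin m (Iio m), g y ≤ 0 := by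
          filter_upwards [Ioo_mem_nhdsLT_of_mem (⟨hlt, le_refl m⟩ : m ∈ Ioc p m)] with y hy
          by_contra hpos
          push_neg at hpos
          have hyB : y ∈ B := ⟨⟨hy.1.le, hy.2.le.trans hmIcc.2⟩, hpos⟩
          exact absurd (csInf_le hBbd hyB) (not_le.mpr hy.2)
        exact le_of_tendsto (hcont.continuousAt.continuousWithinAt) hev
    have hgm : g m = 0 := le_antisymm hgm0' hgm0
    have hder : g' m < 0 := hkey m hmIcc hgm0
    have hsl : ∀ᶠ y in nhdsWithin m {m}ᶜ, slope g m y < 0 :=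
      (hasDerivAt_iff_tendsto_slope.mp (hg m)).eventually_lt_const hder
    have hfreq : ∃ᶠ y in nhds m, y ∈ B := mem_closure_iff_frequently.mp hmcl
    have hfreq' : ∃ᶠ y in nhdsWithin m {m}ᶜ, y ∈ B := by
      rw [frequently_nhdsWithin_iff]
      refine hfreq.mono fun y hy => ⟨hy, ?_⟩
      intro hye
      rw [Set.mem_singleton_iff] at hye
      rw [hye] at hy
      exact absurd hy.2 (by rw [hgm]; exact lt_irrefl 0)
    obtain ⟨y, hyB, hysl⟩ := (hfreq'.and_eventually hsl).exists
    have hym : m < y := by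
      rcases lt_or_eq_of_le (csInf_le hBbd hyB) with h | h
      · exact h
      · exact absurd hyB.2 (by rw [← h, hgm]; exact lt_irrefl 0)
    have hslv : slope g m y = g y / (y - m) := by
      rw [slope_def_field, hgm, sub_zero]
    have : 0 < slope g m y := by
      rw [hslv]; exact div_pos hyB.2 (by linarith)
    linarith
  intro v hv
  rcases lt_or_eq_of_le (part1 v ⟨hv.1.le, hv.2⟩) with h | h
  · exact h
  · exfalso
    have hder : g' v < 0 := hkey v ⟨hv.1.le, hv.2⟩ h.ge
    have hsl : ∀ᶠ y in nhdsWithin v {v}ᶜ, slope g v y < 0 :=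
      (hasDerivAt_iff_tendsto_slope.mp (hg v)).eventually_lt_const hder
    have hsl' : ∀ᶠ y in nhdsWithin v (Iio v), slope g v y < 0 :=
      hsl.filter_mono (nhdsWithin_mono v fun y hy => ne_of_lt hy)
    have hmem : ∀ᶠ y in nhdsWithin v (Iio v), y ∈ Ioo p v :=
      Filter.eventually_of_mem (Ioo_mem_nhdsLT_of_mem ⟨hv.1, le_refl v⟩) fun y hy => hy
    obtain ⟨y, hysl, hyIoo⟩ := (hsl'.and hmem).exists
    have hslv : slope g v y = g y / (y - v) := by
      rw [slope_def_field, h, sub_zero]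
    rw [hslv] at hysl
    rcases div_neg_iff.mp hysl with ⟨hgy, hyv⟩ | ⟨hgy, hyv⟩
    · exact absurd (part1 y ⟨hyIoo.1.le, hyIoo.2.le.trans hv.2⟩) (not_le.mpr hgy)
    · linarith [hyIoo.2]

/-- Main half lemma: unique zero with linear vanishing rate. -/
lemma mainHalf (g g' : ℝ → ℝ) (hg : ∀ y, HasDerivAt g (g' y) y)
    (p q ε : ℝ) (hpq : p < q) (hε : 0 < ε)
    (hkey : ∀ y ∈ Icc p q, 0 ≤ g y → g' y ≤ -ε)
    (hp : 0 < g p) (hq : g q < 0) :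
    ∃ r, r ∈ Ioo p q ∧ g r = 0 ∧
      (∀ y ∈ Icc p q, g y = 0 → y = r) ∧
      (∀ y ∈ Icc p r, ε * (r - y) ≤ g y) ∧
      (∀ y ∈ Ioc r q, g y < 0) := by
  have hcont : Continuous g := continuous_iff_continuousAt.mpr fun y => (hg y).continuousAt
  set S : Set ℝ := Icc p q ∩ {y | g y ≤ 0} with hS
  have hScl : IsClosed S := isClosed_Icc.inter (isClosed_le hcont continuous_const)
  have hSne : S.Nonempty := ⟨q, ⟨hpq.le, le_refl q⟩, hq.le⟩
  have hSbd : BddBelow S := ⟨p, fun y hy => hy.1.1⟩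
  set r := sInf S with hr
  have hrS : r ∈ S := hScl.csInf_mem hSne hSbd
  have hrIcc : r ∈ Icc p q := hrS.1
  have hpos : ∀ y, p ≤ y → y < r → 0 < g y := by
    intro y hpy hyr
    by_contra hcon
    push_neg at hcon
    exact absurd (csInf_le hSbd ⟨⟨hpy, hyr.le.trans hrIcc.2⟩, hcon⟩) (not_le.mpr hyr)
  have hpr : p < r := by
    rcases eq_or_lt_of_le hrIcc.1 with he | h
    · have hpr' : 0 < g r := by rw [← he]; exact hp
      exact absurd hrS.2 (not_le.mpr hpr')
    · exact h
  have hgr : g r = 0 := by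
    refine le_antisymm hrS.2 ?_
    have hev : ∀ᶠ y in nhdsWithin r (Iio r), 0 ≤ g y := by
      filter_upwards [Ioo_mem_nhdsLT_of_mem (⟨hpr, le_refl r⟩ : r ∈ Ioc p r)] with y hy
      exact (hpos y hy.1.le hy.2).le
    exact ge_of_tendsto (hcont.continuousAt.continuousWithinAt) hev
  have hbound : ∀ y ∈ Icc p r, ε * (r - y) ≤ g y := by
    have hanti : AntitoneOn (fun y => g y + ε * y) (Icc p r) := by
      apply antitoneOn_of_deriv_nonpos (convex_Icc p r)
      · exact (hcont.add (continuous_const.mul continuous_id)).continuousOn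
      · intro y _
        exact (((hg y).add (((hasDerivAt_id y).const_mul ε))).differentiableAt).differentiableWithinAt
      · intro y hy
        rw [interior_Icc] at hy
        have hdy : HasDerivAt (fun y => g y + ε * y) (g' y + ε) y := by
          have := (hg y).add ((hasDerivAt_id y).const_mul ε)
          exact this.congr_deriv (by ring)
        rw [hdy.deriv]
        have h0 : 0 ≤ g y := (hpos y hy.1.le hy.2).le
        have := hkey y ⟨hy.1.le, hy.2.le.trans hrIcc.2⟩ h0
        linarith
    intro y hy
    have := hanti hy ⟨hpr.le, le_refl r⟩ hy.2
    simp only at this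
    nlinarith [hgr]
  have hneg : ∀ y ∈ Ioc r q, g y < 0 := by
    apply negAfter g g' hg r q
    · intro y hy h0
      have := hkey y ⟨hrIcc.1.trans hy.1, hy.2⟩ h0
      linarith
    · exact hgr.le
  refine ⟨r, ⟨hpr, lt_of_le_of_ne hrIcc.2 ?_⟩, hgr, ?_, hbound, hneg⟩
  · intro he
    rw [he] at hgr
    exact absurd hgr (ne_of_lt hq)
  · intro y hy hy0
    rcases lt_trichotomy y r with h | h | h
    · have := hbound y ⟨hy.1, h.le⟩
      nlinarith
    · exact h
    · exact absurd hy0 (ne_of_lt (hneg y ⟨h, hy.2⟩))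

/-- **Vanishing rate of `F₋`:** there is a universal constant `c > 0` such that for each
`x ∈ (0,2π)` the function `y ↦ F₋(x,y)` on `[0,2π]` has exactly two zeros
`y' < y''`, with `0 < y' < 2π−x < y'' < 2π`; it is negative exactly on `(y',y'')`, and
`F₋(x,y) ≥ c (y'−y) sin(x/2)` on `[0,y')` and `F₋(x,y) ≥ c (y−y'') sin(x/2)` on `(y'',2π]`. -/
theorem stmt4 :
    ∃ c : ℝ, 0 < c ∧ ∀ x ∈ Set.Ioo (0:ℝ) (2 * π),
      ∃ y' y'' : ℝ,
        0 < y' ∧ y' < 2 * π - x ∧ 2 * π - x < y'' ∧ y'' < 2 * π ∧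
        Fminus x y' = 0 ∧ Fminus x y'' = 0 ∧
        (∀ y ∈ Set.Icc (0:ℝ) (2 * π), Fminus x y = 0 → y = y' ∨ y = y'') ∧
        (∀ y ∈ Set.Icc (0:ℝ) (2 * π), (Fminus x y < 0 ↔ y ∈ Set.Ioo y' y'')) ∧
        (∀ y ∈ Set.Ico (0:ℝ) y', c * (y' - y) * Real.sin (x / 2) ≤ Fminus x y) ∧
        (∀ y ∈ Set.Ioc y'' (2 * π), c * (y - y'') * Real.sin (x / 2) ≤ Fminus x y) := by
  refine ⟨2, by norm_num, ?_⟩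
  intro x hx
  obtain ⟨hx0, hx2⟩ := hx
  have hπ := Real.pi_pos
  have ha1 : 0 < x / 2 := by linarith
  have ha2 : x / 2 < π := by linarith
  set s1 := Real.sin (x / 2) with hs1def
  set c1 := Real.cos (x / 2) with hc1def
  have hs1 : 0 < s1 := Real.sin_pos_of_pos_of_lt_pi ha1 ha2
  have hc1lt : c1 < 1 := by
    have := Real.cos_lt_cos_of_nonneg_of_le_pi (le_refl 0) ha2.le ha1
    rwa [Real.cos_zero] at this
  have hc1gt : -1 < c1 := by
    have := Real.cos_lt_cos_of_nonneg_of_le_pi (by linarith : (0:ℝ) ≤ x / 2) (le_refl π) ha2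
    rwa [Real.cos_pi] at this
  have hpyth1 : c1 ^ 2 + s1 ^ 2 = 1 := by
    rw [hc1def, hs1def, add_comm]; exact Real.sin_sq_add_cos_sq (x / 2)
  -- key inequality, left half
  have hkeyL : ∀ y ∈ Icc (0:ℝ) (2 * π - x), 0 ≤ Fminus x y → Dm x y ≤ -(2 * s1) := by
    intro y hy h0
    set c2 := Real.cos (y / 2) with hc2def
    set s2 := Real.sin (y / 2) with hs2def
    have hy1 : 0 ≤ y / 2 := by linarith [hy.1]
    have hy2 : y / 2 ≤ π - x / 2 := by linarith [hy.2]
    have hs2 : 0 ≤ s2 := Real.sin_nonneg_of_nonneg_of_le_pi hy1 (by linarith)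
    have hsum : 0 ≤ c1 + c2 := by
      have h := Real.cos_le_cos_of_nonneg_of_le_pi hy1 (by linarith : π - x / 2 ≤ π) hy2
      rw [Real.cos_pi_sub] at h
      rw [hc1def, hc2def]; linarith
    have hpyth2 : c2 ^ 2 + s2 ^ 2 = 1 := by
      rw [hc2def, hs2def, add_comm]; exact Real.sin_sq_add_cos_sq (y / 2)
    have hf : 4 * (s1 * s2) ≤ (c1 + c2) ^ 2 := by
      simp only [Fminus] at h0
      rw [hc1def, hc2def, hs1def, hs2def]; nlinarith
    have := key_ineq c1 s1 c2 s2 hpyth1 hpyth2 hs1 hs2 hsum hf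
    simp only [Dm]
    rw [← hc1def, ← hc2def, ← hs1def, ← hs2def]
    linarith
  -- key inequality, right half
  have hkeyR : ∀ y ∈ Icc (2 * π - x) (2 * π), 0 ≤ Fminus x y → 2 * s1 ≤ Dm x y := by
    intro y hy h0
    set c2 := Real.cos (y / 2) with hc2def
    set s2 := Real.sin (y / 2) with hs2def
    have hy1 : π - x / 2 ≤ y / 2 := by linarith [hy.1]
    have hy2 : y / 2 ≤ π := by linarith [hy.2]
    have hs2 : 0 ≤ s2 := Real.sin_nonneg_of_nonneg_of_le_pi (by linarith) hy2
    have hsum : 0 ≤ -c1 + -c2 := by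
      have h := Real.cos_le_cos_of_nonneg_of_le_pi (by linarith : (0:ℝ) ≤ π - x / 2) hy2 hy1
      rw [Real.cos_pi_sub] at h
      rw [hc1def, hc2def]; linarith
    have hpyth1' : (-c1) ^ 2 + s1 ^ 2 = 1 := by rw [neg_pow]; simpa using hpyth1
    have hpyth2 : (-c2) ^ 2 + s2 ^ 2 = 1 := by
      have : c2 ^ 2 + s2 ^ 2 = 1 := by
        rw [hc2def, hs2def, add_comm]; exact Real.sin_sq_add_cos_sq (y / 2)
      rw [neg_pow]; simpa using this
    have hf : 4 * (s1 * s2) ≤ (-c1 + -c2) ^ 2 := by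
      simp only [Fminus] at h0
      rw [hc1def, hc2def, hs1def, hs2def]; nlinarith
    have := key_ineq (-c1) s1 (-c2) s2 hpyth1' hpyth2 hs1 hs2 hsum hf
    simp only [Dm]
    rw [← hc1def, ← hc2def, ← hs1def, ← hs2def]
    linarith
  -- endpoint values
  have hf0 : 0 < Fminus x 0 := by
    simp only [Fminus, zero_div, Real.cos_zero, Real.sin_zero, mul_zero]
    rw [← hc1def]
    nlinarith
  have hfmid : Fminus x (2 * π - x) < 0 := by
    simp only [Fminus]
    rw [show (2 * π - x) / 2 = π - x / 2 by ring, Real.cos_pi_sub, Real.sin_pi_sub,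
      ← hc1def, ← hs1def]
    nlinarith
  have hf2pi : 0 < Fminus x (2 * π) := by
    simp only [Fminus]
    rw [show (2 * π) / 2 = π by ring, Real.cos_pi, Real.sin_pi, ← hc1def]
    nlinarith
  -- left half
  obtain ⟨y', hy'mem, hy'zero, hy'uniq, hy'bound, hy'neg⟩ :=
    mainHalf (fun y => Fminus x y) (fun y => Dm x y) (fun y => hasDerivAt_Fminus x y)
      0 (2 * π - x) (2 * s1) (by linarith) (by linarith) hkeyL hf0 hfmid
  -- right half (reflected)
  have hgR : ∀ t : ℝ, HasDerivAt (fun t => Fminus x (4 * π - x - t)) (-Dm x (4 * π - x - t)) t := by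
    intro t
    have hlin : HasDerivAt (fun t : ℝ => 4 * π - x - t) (0 - 1) t :=
      (hasDerivAt_const t (4 * π - x)).sub (hasDerivAt_id t)
    have := (hasDerivAt_Fminus x (4 * π - x - t)).comp t hlin
    refine this.congr_deriv ?_
    ring
  have hgRp : 0 < Fminus x (4 * π - x - (2 * π - x)) := by
    rw [show 4 * π - x - (2 * π - x) = 2 * π by ring]; exact hf2pi
  have hgRq : Fminus x (4 * π - x - 2 * π) < 0 := by
    rw [show 4 * π - x - 2 * π = 2 * π - x by ring]; exact hfmid
  obtain ⟨r, hrmem, hrzero, hruniq, hrbound, hrneg⟩ :=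
    mainHalf (fun t => Fminus x (4 * π - x - t)) (fun t => -Dm x (4 * π - x - t)) hgR
      (2 * π - x) (2 * π) (2 * s1) (by linarith) (by linarith)
      (by
        intro t ht h0
        have hymem : 4 * π - x - t ∈ Icc (2 * π - x) (2 * π) := ⟨by linarith [ht.2], by linarith [ht.1]⟩
        have := hkeyR (4 * π - x - t) hymem h0
        show -Dm x (4 * π - x - t) ≤ -(2 * s1)
        linarith)
      hgRp hgRq
  set y'' := 4 * π - x - r with hy''def
  have hy''mem : 2 * π - x < y'' ∧ y'' < 2 * π := ⟨by simp only [hy''def]; linarith [hrmem.2], by simp only [hy''def]; linarith [hrmem.1]⟩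
  have hy''zero : Fminus x y'' = 0 := hrzero
  -- right uniqueness translated
  have hRuniq : ∀ y ∈ Icc (2 * π - x) (2 * π), Fminus x y = 0 → y = y'' := by
    intro y hy h0
    have ht : 4 * π - x - y ∈ Icc (2 * π - x) (2 * π) := ⟨by linarith [hy.2], by linarith [hy.1]⟩
    have hgt : Fminus x (4 * π - x - (4 * π - x - y)) = 0 := by
      rw [show 4 * π - x - (4 * π - x - y) = y by ring]; exact h0
    have := hruniq (4 * π - x - y) ht hgt
    simp only [hy''def]; linarith
  -- right bound translated
  have hRbound : ∀ y ∈ Ioc y'' (2 * π), 2 * s1 * (y - y'') ≤ Fminus x y := by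
    intro y hy
    have ht : 4 * π - x - y ∈ Icc (2 * π - x) r := by
      constructor
      · linarith [hy.2]
      · simp only [hy''def] at hy; linarith [hy.1]
    have := hrbound (4 * π - x - y) ht
    rw [show 4 * π - x - (4 * π - x - y) = y by ring] at this
    have he : r - (4 * π - x - y) = y - y'' := by simp only [hy''def]; ring
    rw [he] at this
    exact this
  -- right negativity translated
  have hRneg : ∀ y, 2 * π - x ≤ y → y < y'' → Fminus x y < 0 := by
    intro y h1 h2
    have ht : 4 * π - x - y ∈ Ioc r (2 * π) := by
      constructor
      · simp only [hy''def] at h2; linarith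
      · linarith
    have := hrneg (4 * π - x - y) ht
    rwa [show 4 * π - x - (4 * π - x - y) = y by ring] at this
  refine ⟨y', y'', hy'mem.1, hy'mem.2, hy''mem.1, hy''mem.2, hy'zero, hy''zero, ?_, ?_, ?_, ?_⟩
  · -- uniqueness of zeros
    intro y hy h0
    rcases le_or_gt y (2 * π - x) with h | h
    · exact Or.inl (hy'uniq y ⟨hy.1, h⟩ h0)
    · exact Or.inr (hRuniq y ⟨h.le, hy.2⟩ h0)
  · -- negativity iff
    intro y hy
    constructor
    · intro hneg
      constructor
      · by_contra hcon
        push_neg at hcon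
        have := hy'bound y ⟨hy.1, hcon⟩
        nlinarith
      · by_contra hcon
        push_neg at hcon
        rcases eq_or_lt_of_le hcon with he | hlt
        · rw [← he, hy''zero] at hneg; exact lt_irrefl 0 hneg
        · have := hRbound y ⟨hlt, hy.2⟩
          nlinarith
    · intro hmem
      rcases le_or_gt y (2 * π - x) with h | h
      · exact hy'neg y ⟨hmem.1, h⟩
      · exact hRneg y h.le hmem.2
  · -- left bound
    intro y hy
    have := hy'bound y ⟨hy.1, hy.2.le⟩
    have he : (2:ℝ) * (y' - y) * Real.sin (x / 2) = 2 * s1 * (y' - y) := by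
      rw [hs1def]; ring
    rw [he]
    exact this
  · -- right bound
    intro y hy
    have := hRbound y hy
    have he : (2:ℝ) * (y - y'') * Real.sin (x / 2) = 2 * s1 * (y - y'') := by
      rw [hs1def]; ring
    rw [he]
    exact this
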